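/- Let A : V → V be a symmetric positive semidefinite linear operator, let λ > 0 satisfy λ μ ≤ 1 for every eigenvalue μ of A, and set R = Id − λA. Let Q : V → V be a linear operator and γ > 0 a constant such that the approximation property ‖(Id − Q)v‖ ≤ γ ⟨Av, v⟩^{1/2} holds for all v ∈ V. Then for every integer m ≥ 1 and every v ∈ V, ⟨A R^m (Id − Q)v, R^m (Id − Q)v⟩^{1/2} ≤ γ λ^{−1/2} m^{−1/2} ⟨Av, v⟩^{1/2}. -/

import Mathlib

open RealInnerProductSpace

private lemma smooth_scalar (m : ℕ) (hm : 1 ≤ m) (x : ℝ) (hx0 : 0 ≤ x) (hx1 : x ≤ 1) :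
    x * (1 - x) ^ (2 * m) ≤ 1 / m := by
  have hmpos : (0:ℝ) < m := by exact_mod_cast hm
  have h1x : (0:ℝ) ≤ 1 - x := by linarith
  have hb : 1 + (m:ℝ) * x ≤ (1 + x) ^ m := by
    have := one_add_mul_le_pow (a := x) (by linarith) m
    simpa using this
  have hprod : (1 - x) ^ m * (1 + x) ^ m ≤ 1 := by
    rw [← mul_pow]
    calc ((1 - x) * (1 + x)) ^ m ≤ 1 ^ m := by
          apply pow_le_pow_left₀ (by nlinarith) (by nlinarith)
        _ = 1 := one_pow m
  have hpos : (0:ℝ) < 1 + (m:ℝ) * x := by nlinarith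
  have h2 : (1 - x) ^ m ≤ 1 / (1 + (m:ℝ) * x) := by
    rw [le_div_iff₀ hpos]
    calc (1 - x) ^ m * (1 + (m:ℝ) * x) ≤ (1 - x) ^ m * (1 + x) ^ m := by
          apply mul_le_mul_of_nonneg_left hb (pow_nonneg h1x m)
        _ ≤ 1 := hprod
  have h3 : (1 - x) ^ (2 * m) ≤ (1 - x) ^ m := by
    apply pow_le_pow_of_le_one h1x (by linarith) (by omega)
  have h4 : x * (1 - x) ^ (2 * m) ≤ x / (1 + (m:ℝ) * x) := by
    rw [div_eq_mul_inv, ← one_div]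
    exact mul_le_mul_of_nonneg_left (h3.trans h2) hx0
  refine h4.trans ?_
  rw [div_le_div_iff₀ hpos hmpos]
  nlinarith

/-- Abstract mechanism of the two-grid convergence estimate (Lemma 6.3): combining the
smoothing property of the damped Richardson smoother `R = Id − λA` with the approximation
property `‖(Id − Q)v‖ ≤ γ ⟨Av, v⟩^{1/2}` of the coarse-grid correction `Q` yields the
`O(m^{−1/2})` two-grid bound. -/
theorem stmt13
    {V : Type*} [NormedAddCommGroup V] [InnerProductSpace ℝ V] [FiniteDimensional ℝ V]
    (A : V →ₗ[ℝ] V)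
    (hsym : ∀ v w : V, ⟪A v, w⟫ = ⟪v, A w⟫)
    (hpsd : ∀ v : V, 0 ≤ ⟪A v, v⟫)
    (lam : ℝ) (hlam : 0 < lam)
    (hspec : ∀ (μ : ℝ) (v : V), v ≠ 0 → A v = μ • v → lam * μ ≤ 1)
    (R : V →ₗ[ℝ] V) (hR : ∀ v : V, R v = v - lam • A v)
    (Q : V →ₗ[ℝ] V) (γ : ℝ) (hγ : 0 < γ)
    (happrox : ∀ v : V, ‖v - Q v‖ ≤ γ * Real.sqrt ⟪A v, v⟫) :
    ∀ (m : ℕ), 1 ≤ m → ∀ v : V,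
      Real.sqrt ⟪A ((R ^ m) (v - Q v)), (R ^ m) (v - Q v)⟫ ≤
        γ * (Real.sqrt lam)⁻¹ * (Real.sqrt m)⁻¹ * Real.sqrt ⟪A v, v⟫ := by
  intro m hm v
  have hA : A.IsSymmetric := fun x y => hsym x y
  set n := Module.finrank ℝ V with hn
  have hfin : Module.finrank ℝ V = n := rfl
  let b := hA.eigenvectorBasis hfin
  let μ : Fin n → ℝ := hA.eigenvalues hfin
  have hAb : ∀ i, A (b i) = μ i • b i := fun i => hA.apply_eigenvectorBasis hfin i
  -- eigenvalues are nonnegative and lam * μ i ≤ 1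
  have hμ0 : ∀ i, 0 ≤ μ i := by
    intro i
    have := hpsd (b i)
    rw [hAb i, real_inner_smul_left, real_inner_self_eq_norm_sq, b.orthonormal.1 i] at this
    simpa using this
  have hμ1 : ∀ i, lam * μ i ≤ 1 := by
    intro i
    exact hspec (μ i) (b i) (b.orthonormal.ne_zero i) (hAb i)
  -- repr formulas
  have reprA : ∀ (x : V) (i : Fin n), b.repr (A x) i = μ i * b.repr x i := by
    intro x i
    rw [b.repr_apply_apply, b.repr_apply_apply, ← hsym, hAb i, real_inner_smul_left]
  have reprR : ∀ (x : V) (i : Fin n), b.repr (R x) i = (1 - lam * μ i) * b.repr x i := by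
    intro x i
    rw [hR]
    have : b.repr (x - lam • A x) i = b.repr x i - lam * b.repr (A x) i := by
      simp [map_sub, map_smul]
    rw [this, reprA]
    ring
  have reprRpow : ∀ (k : ℕ) (x : V) (i : Fin n),
      b.repr ((R ^ k) x) i = (1 - lam * μ i) ^ k * b.repr x i := by
    intro k
    induction k with
    | zero => intro x i; simp
    | succ k ih =>
      intro x i
      rw [pow_succ, Module.End.mul_apply, ih, reprR, pow_succ]
      ring
  -- inner product via repr
  have inner_repr : ∀ x y : V, ⟪x, y⟫ = ∑ i, b.repr x i * b.repr y i := by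
    intro x y
    rw [← b.repr.inner_map_map x y]
    rw [PiLp.inner_apply]
    simp
    exact Finset.sum_congr rfl fun _ _ => mul_comm _ _
  set w := v - Q v with hw
  set u := (R ^ m) w with hu
  have hmpos : (0:ℝ) < m := by exact_mod_cast hm
  -- key smoothing estimate
  have key : ⟪A u, u⟫ ≤ 1 / (lam * m) * ‖w‖ ^ 2 := by
    rw [inner_repr]
    have hnorm : ‖w‖ ^ 2 = ∑ i, b.repr w i * b.repr w i := by
      rw [← real_inner_self_eq_norm_sq, inner_repr]
    rw [hnorm, Finset.mul_sum]
    apply Finset.sum_le_sum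
    intro i _
    rw [reprA, hu, reprRpow]
    have hc : (0:ℝ) ≤ b.repr w i * b.repr w i := mul_self_nonneg _
    have hsc := smooth_scalar m hm (lam * μ i) (mul_nonneg hlam.le (hμ0 i)) (hμ1 i)
    have hterm : μ i * ((1 - lam * μ i) ^ m * b.repr w i) *
        ((1 - lam * μ i) ^ m * b.repr w i) =
        (1 / lam) * (lam * μ i * (1 - lam * μ i) ^ (2 * m)) * (b.repr w i * b.repr w i) := by
      field_simp
      ring
    rw [hterm]
    have : (1 / lam) * (lam * μ i * (1 - lam * μ i) ^ (2 * m)) ≤ (1 / lam) * (1 / m) := by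
      apply mul_le_mul_of_nonneg_left hsc (by positivity)
    calc (1 / lam) * (lam * μ i * (1 - lam * μ i) ^ (2 * m)) * (b.repr w i * b.repr w i)
        ≤ (1 / lam) * (1 / m) * (b.repr w i * b.repr w i) :=
          mul_le_mul_of_nonneg_right this hc
      _ = 1 / (lam * m) * (b.repr w i * b.repr w i) := by
          rw [one_div_mul_one_div]
  -- conclude
  have h1 : Real.sqrt ⟪A u, u⟫ ≤ Real.sqrt (1 / (lam * m) * ‖w‖ ^ 2) :=
    Real.sqrt_le_sqrt key
  have h2 : Real.sqrt (1 / (lam * m) * ‖w‖ ^ 2) =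
      (Real.sqrt lam)⁻¹ * (Real.sqrt m)⁻¹ * ‖w‖ := by
    rw [Real.sqrt_mul (by positivity), Real.sqrt_sq (norm_nonneg w), one_div,
      Real.sqrt_inv, Real.sqrt_mul hlam.le, mul_inv]
  have h3 : ‖w‖ ≤ γ * Real.sqrt ⟪A v, v⟫ := happrox v
  calc Real.sqrt ⟪A u, u⟫ ≤ (Real.sqrt lam)⁻¹ * (Real.sqrt m)⁻¹ * ‖w‖ := by
        rw [← h2]; exact h1
    _ ≤ (Real.sqrt lam)⁻¹ * (Real.sqrt m)⁻¹ * (γ * Real.sqrt ⟪A v, v⟫) := by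
        apply mul_le_mul_of_nonneg_left h3 (by positivity)
    _ = γ * (Real.sqrt lam)⁻¹ * (Real.sqrt m)⁻¹ * Real.sqrt ⟪A v, v⟫ := by ring
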